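/- (Monotone decrease of alternating minimization, Theorem 4(i)) Let E be the space of real m×n matrices, S = { M ∈ E : every column of M has unit Euclidean norm }, D ∈ ℝ^{d×n} of full row rank d, β > 0, f : E → ℝ differentiable with L-Lipschitz gradient, and 0 < α < 1/L. Define F(M, P) = f(M) + (1/(2β))‖M − P D‖_F². Suppose the sequences (M_k) ⊆ S and (P_k) ⊆ ℝ^{m×d} satisfy: M_{k+1} minimizes N ↦ ⟨∇f(M_k), N − M_k⟩ + (1/(2α))‖N − M_k‖_F² + (1/(2β))‖N − P_k D‖_F² over N ∈ S, and P_{k+1} = M_{k+1} Dᵀ (D Dᵀ)⁻¹. Then for every k: F(M_{k+1}, P_{k+1}) ≤ F(M_k, P_k) − (1/(2α) − L/2)‖M_{k+1} − M_k‖_F²; in particular F(M_k, P_k) is monotonically nonincreasing. -/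

import Mathlib

open Matrix

attribute [local instance] Matrix.normedAddCommGroup Matrix.normedSpace

/-- The Euclidean norm of the `i`-th column of a matrix. -/
noncomputable def colNorm {m n : ℕ} (M : Matrix (Fin m) (Fin n) ℝ) (i : Fin n) : ℝ :=
  Real.sqrt (∑ k, M k i ^ 2)

/-- The Frobenius inner product `⟨A, B⟩ = Σ_{i,j} a_{ij} b_{ij}` of m×n matrices. -/
noncomputable def finner {m n : ℕ} (A B : Matrix (Fin m) (Fin n) ℝ) : ℝ :=
  ∑ i, ∑ j, A i j * B i j

/-- The squared Frobenius norm `‖V‖_F²`. -/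
noncomputable def frobSq {m n : ℕ} (V : Matrix (Fin m) (Fin n) ℝ) : ℝ :=
  ∑ i, ∑ j, V i j ^ 2

/-- The Frobenius norm `‖V‖_F`. -/
noncomputable def frobNorm {m n : ℕ} (V : Matrix (Fin m) (Fin n) ℝ) : ℝ :=
  Real.sqrt (frobSq V)

lemma frobSq_nonneg' {m n : ℕ} (V : Matrix (Fin m) (Fin n) ℝ) : 0 ≤ frobSq V := by
  unfold frobSq; positivity

lemma frobNorm_mul_self' {m n : ℕ} (V : Matrix (Fin m) (Fin n) ℝ) :
    frobNorm V * frobNorm V = frobSq V :=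
  Real.mul_self_sqrt (frobSq_nonneg' V)

lemma finner_le' {m n : ℕ} (A B : Matrix (Fin m) (Fin n) ℝ) :
    finner A B ≤ frobNorm A * frobNorm B := by
  have h := Real.sum_mul_le_sqrt_mul_sqrt (Finset.univ : Finset (Fin m × Fin n))
    (fun p => A p.1 p.2) (fun p => B p.1 p.2)
  simpa [finner, frobNorm, frobSq, Fintype.sum_prod_type] using h

lemma frobSq_smul' {m n : ℕ} (t : ℝ) (V : Matrix (Fin m) (Fin n) ℝ) :
    frobSq (t • V) = t ^ 2 * frobSq V := by
  simp [frobSq, Matrix.smul_apply, smul_eq_mul, mul_pow, Finset.mul_sum]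

lemma frobNorm_smul' {m n : ℕ} (t : ℝ) (V : Matrix (Fin m) (Fin n) ℝ) :
    frobNorm (t • V) = |t| * frobNorm V := by
  rw [frobNorm, frobSq_smul', Real.sqrt_mul (sq_nonneg t), Real.sqrt_sq_eq_abs, frobNorm]

lemma finner_sub_left' {m n : ℕ} (A B C : Matrix (Fin m) (Fin n) ℝ) :
    finner (A - B) C = finner A C - finner B C := by
  simp [finner, Matrix.sub_apply, sub_mul, Finset.sum_sub_distrib]

lemma frobNorm_nonneg' {m n : ℕ} (V : Matrix (Fin m) (Fin n) ℝ) : 0 ≤ frobNorm V :=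
  Real.sqrt_nonneg _

/-- Descent lemma: quadratic upper bound from Lipschitz gradient. -/
lemma descent' {m n : ℕ} (L : ℝ)
    (f : Matrix (Fin m) (Fin n) ℝ → ℝ)
    (f' : Matrix (Fin m) (Fin n) ℝ → Matrix (Fin m) (Fin n) ℝ)
    (hdiff : ∀ X : Matrix (Fin m) (Fin n) ℝ, DifferentiableAt ℝ f X ∧
      ∀ H : Matrix (Fin m) (Fin n) ℝ, fderiv ℝ f X H = finner (f' X) H)
    (hlip : ∀ X Y : Matrix (Fin m) (Fin n) ℝ, frobNorm (f' X - f' Y) ≤ L * frobNorm (X - Y))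
    (X Y : Matrix (Fin m) (Fin n) ℝ) :
    f Y ≤ f X + finner (f' X) (Y - X) + L / 2 * frobSq (Y - X) := by
  set H := Y - X with hH
  set φ : ℝ → ℝ := fun t => f (X + t • H) - t * finner (f' X) H - L / 2 * t ^ 2 * frobSq H
    with hφ
  have hline : ∀ t : ℝ, HasDerivAt (fun s : ℝ => X + s • H) H t := by
    intro t
    have h := ((hasDerivAt_id t).smul_const H).const_add X
    simp only [id, one_smul] at h
    exact h
  have hg : ∀ t : ℝ, HasDerivAt (fun s => f (X + s • H)) (finner (f' (X + t • H)) H) t := by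
    intro t
    have := ((hdiff (X + t • H)).1.hasFDerivAt).comp_hasDerivAt t (hline t)
    have h2 : HasDerivAt (fun s => f (X + s • H)) (fderiv ℝ f (X + t • H) H) t := this
    rw [(hdiff (X + t • H)).2 H] at h2
    exact h2
  have hφ' : ∀ t : ℝ, HasDerivAt φ
      (finner (f' (X + t • H)) H - finner (f' X) H - L / 2 * (2 * t) * frobSq H) t := by
    intro t
    have h1 : HasDerivAt (fun s : ℝ => s * finner (f' X) H) (finner (f' X) H) t := by
      simpa using (hasDerivAt_id t).mul_const (finner (f' X) H)
    have h2 : HasDerivAt (fun s : ℝ => L / 2 * s ^ 2 * frobSq H)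
        (L / 2 * (2 * t) * frobSq H) t := by
      have := (hasDerivAt_pow 2 t).const_mul (L / 2)
      simpa [mul_comm, mul_assoc, mul_left_comm] using this.mul_const (frobSq H)
    exact ((hg t).sub h1).sub h2
  have key : φ 1 ≤ φ 0 := by
    have hanti : AntitoneOn φ (Set.Icc (0:ℝ) 1) := by
      apply antitoneOn_of_deriv_nonpos (convex_Icc 0 1)
      · exact fun t _ => ((hφ' t).differentiableAt).continuousAt.continuousWithinAt
      · exact fun t _ => ((hφ' t).differentiableAt).differentiableWithinAt
      · intro t ht
        rw [interior_Icc] at ht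
        rw [(hφ' t).deriv]
        have hcs : finner (f' (X + t • H)) H - finner (f' X) H ≤ L * t * frobSq H := by
          have h1 : finner (f' (X + t • H) - f' X) H ≤
              frobNorm (f' (X + t • H) - f' X) * frobNorm H := finner_le' _ _
          have h2 : frobNorm (f' (X + t • H) - f' X) ≤ L * frobNorm ((X + t • H) - X) :=
            hlip _ _
          have h3 : frobNorm ((X + t • H) - X) = t * frobNorm H := by
            rw [add_sub_cancel_left, frobNorm_smul', abs_of_pos ht.1]
          rw [finner_sub_left'] at h1
          have h4 : frobNorm (f' (X + t • H) - f' X) * frobNorm H ≤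
              (L * (t * frobNorm H)) * frobNorm H := by
            apply mul_le_mul_of_nonneg_right _ (frobNorm_nonneg' H)
            rw [← h3]; exact h2
          calc finner (f' (X + t • H)) H - finner (f' X) H ≤ _ := h1
            _ ≤ (L * (t * frobNorm H)) * frobNorm H := h4
            _ = L * t * frobSq H := by
                rw [← frobNorm_mul_self' H]; ring
        nlinarith [hcs]
    exact hanti (Set.mem_Icc.2 ⟨le_refl 0, zero_le_one⟩)
      (Set.mem_Icc.2 ⟨zero_le_one, le_refl 1⟩) zero_le_one
  have e0 : φ 0 = f X := by simp [hφ]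
  have e1 : φ 1 = f (X + H) - finner (f' X) H - L / 2 * frobSq H := by simp [hφ]
  have eXH : X + H = Y := by rw [hH]; abel
  rw [e0, e1, eXH] at key
  linarith

lemma frobSq_add' {m n : ℕ} (A B : Matrix (Fin m) (Fin n) ℝ) :
    frobSq (A + B) = frobSq A + 2 * finner A B + frobSq B := by
  simp only [frobSq, finner, Matrix.add_apply, Finset.mul_sum, ← Finset.sum_add_distrib]
  congr 1; ext i; congr 1; ext j; ring

lemma finner_mulD' {m n d : ℕ} (A : Matrix (Fin m) (Fin n) ℝ)
    (Q : Matrix (Fin m) (Fin d) ℝ) (D : Matrix (Fin d) (Fin n) ℝ) :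
    finner A (Q * D) = finner (A * Dᵀ) Q := by
  simp only [finner, Matrix.mul_apply, Matrix.transpose_apply, Finset.mul_sum,
    Finset.sum_mul]
  rw [Finset.sum_congr rfl fun i _ => Finset.sum_comm]
  congr 1; ext i; congr 1; ext k; congr 1; ext j; ring

/-- The least-squares property of `P* = M Dᵀ (D Dᵀ)⁻¹`. -/
lemma leastSq' {m n d : ℕ} (D : Matrix (Fin d) (Fin n) ℝ) (hD : IsUnit (D * Dᵀ))
    (M : Matrix (Fin m) (Fin n) ℝ) (P : Matrix (Fin m) (Fin d) ℝ) :
    frobSq (M - M * Dᵀ * (D * Dᵀ)⁻¹ * D) ≤ frobSq (M - P * D) := by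
  set Pstar : Matrix (Fin m) (Fin d) ℝ := M * Dᵀ * (D * Dᵀ)⁻¹ with hPs
  have hinv : (D * Dᵀ)⁻¹ * (D * Dᵀ) = 1 :=
    Matrix.nonsing_inv_mul _ ((Matrix.isUnit_iff_isUnit_det _).mp hD)
  have horth : (M - Pstar * D) * Dᵀ = 0 := by
    rw [Matrix.sub_mul, hPs]
    rw [Matrix.mul_assoc (M * Dᵀ * (D * Dᵀ)⁻¹) D Dᵀ]
    rw [Matrix.mul_assoc (M * Dᵀ) (D * Dᵀ)⁻¹ (D * Dᵀ), hinv, Matrix.mul_one, sub_self]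
  have hdecomp : M - P * D = (M - Pstar * D) + (Pstar - P) * D := by
    rw [Matrix.sub_mul]; abel
  rw [hdecomp, frobSq_add', finner_mulD', horth]
  have hz : finner (0 : Matrix (Fin m) (Fin d) ℝ) (Pstar - P) = 0 := by
    simp [finner]
  rw [hz]
  have := frobSq_nonneg' ((Pstar - P) * D)
  linarith

/-- monotone decrease of alternating minimization, Theorem 4(i):
with `F(M,P) = f(M) + (1/(2β))‖M − PD‖_F²`, if `M_{k+1}` minimizes the proximal surrogate
over the set `S` of matrices with unit-norm columns and `P_{k+1} = M_{k+1}Dᵀ(DDᵀ)⁻¹`, then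
`F(M_{k+1},P_{k+1}) ≤ F(M_k,P_k) − (1/(2α) − L/2)‖M_{k+1} − M_k‖_F²`; in particular
`F(M_k,P_k)` is monotonically nonincreasing. -/
theorem stmt_14 {m n d : ℕ} (L α β : ℝ) (hL : 0 < L) (hα : 0 < α) (hαL : α < 1 / L)
    (hβ : 0 < β)
    (D : Matrix (Fin d) (Fin n) ℝ) (hD : IsUnit (D * Dᵀ))
    (f : Matrix (Fin m) (Fin n) ℝ → ℝ)
    (f' : Matrix (Fin m) (Fin n) ℝ → Matrix (Fin m) (Fin n) ℝ)
    (hdiff : ∀ X : Matrix (Fin m) (Fin n) ℝ, DifferentiableAt ℝ f X ∧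
      ∀ H : Matrix (Fin m) (Fin n) ℝ, fderiv ℝ f X H = finner (f' X) H)
    (hlip : ∀ X Y : Matrix (Fin m) (Fin n) ℝ, frobNorm (f' X - f' Y) ≤ L * frobNorm (X - Y))
    (Mseq : ℕ → Matrix (Fin m) (Fin n) ℝ) (Pseq : ℕ → Matrix (Fin m) (Fin d) ℝ)
    (hMS : ∀ k, ∀ i : Fin n, colNorm (Mseq k) i = 1)
    (hMmin : ∀ k, ∀ N : Matrix (Fin m) (Fin n) ℝ, (∀ i : Fin n, colNorm N i = 1) →
      finner (f' (Mseq k)) (Mseq (k + 1) - Mseq k)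
          + 1 / (2 * α) * frobSq (Mseq (k + 1) - Mseq k)
          + 1 / (2 * β) * frobSq (Mseq (k + 1) - Pseq k * D) ≤
        finner (f' (Mseq k)) (N - Mseq k) + 1 / (2 * α) * frobSq (N - Mseq k)
          + 1 / (2 * β) * frobSq (N - Pseq k * D))
    (hPup : ∀ k, Pseq (k + 1) = Mseq (k + 1) * Dᵀ * (D * Dᵀ)⁻¹) :
    (∀ k, f (Mseq (k + 1)) + 1 / (2 * β) * frobSq (Mseq (k + 1) - Pseq (k + 1) * D) ≤
        f (Mseq k) + 1 / (2 * β) * frobSq (Mseq k - Pseq k * D)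
          - (1 / (2 * α) - L / 2) * frobSq (Mseq (k + 1) - Mseq k)) ∧
    Antitone (fun k => f (Mseq k) + 1 / (2 * β) * frobSq (Mseq k - Pseq k * D)) := by
  have hstep : ∀ k, f (Mseq (k + 1)) + 1 / (2 * β) * frobSq (Mseq (k + 1) - Pseq (k + 1) * D) ≤
      f (Mseq k) + 1 / (2 * β) * frobSq (Mseq k - Pseq k * D)
        - (1 / (2 * α) - L / 2) * frobSq (Mseq (k + 1) - Mseq k) := by
    intro k
    have hmin := hMmin k (Mseq k) (hMS k)
    have hz1 : Mseq k - Mseq k = 0 := sub_self _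
    rw [hz1] at hmin
    have hz2 : finner (f' (Mseq k)) (0 : Matrix (Fin m) (Fin n) ℝ) = 0 := by simp [finner]
    have hz3 : frobSq (0 : Matrix (Fin m) (Fin n) ℝ) = 0 := by simp [frobSq]
    rw [hz2, hz3] at hmin
    have hdesc := descent' L f f' hdiff hlip (Mseq k) (Mseq (k + 1))
    have hls : frobSq (Mseq (k + 1) - Pseq (k + 1) * D) ≤
        frobSq (Mseq (k + 1) - Pseq k * D) := by
      rw [hPup k]
      exact leastSq' D hD (Mseq (k + 1)) (Pseq k)
    have hls' : 1 / (2 * β) * frobSq (Mseq (k + 1) - Pseq (k + 1) * D) ≤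
        1 / (2 * β) * frobSq (Mseq (k + 1) - Pseq k * D) := by
      apply mul_le_mul_of_nonneg_left hls
      positivity
    have hexp : (1 / (2 * α) - L / 2) * frobSq (Mseq (k + 1) - Mseq k)
        = 1 / (2 * α) * frobSq (Mseq (k + 1) - Mseq k)
          - L / 2 * frobSq (Mseq (k + 1) - Mseq k) := by ring
    linarith [hmin, hdesc, hls', hexp.le, hexp.ge]
  refine ⟨hstep, ?_⟩
  apply antitone_nat_of_succ_le
  intro k
  have hLα : α * L < 1 := (lt_div_iff₀ hL).mp hαL
  have hcoef : L / 2 ≤ 1 / (2 * α) := by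
    rw [div_le_div_iff₀ two_pos (by positivity)]
    nlinarith
  have hnn : 0 ≤ (1 / (2 * α) - L / 2) * frobSq (Mseq (k + 1) - Mseq k) :=
    mul_nonneg (by linarith) (frobSq_nonneg' _)
  have := hstep k
  linarith
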